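/- Let H be a complex Hilbert space, W a unitary on H (W*W = 1 = WW*), and let U be the isometry on K = lp (fun _ : List (Fin d) => H) 2 determined by U(single σ h) = single (act 1 σ) (W^{carry 1 σ} h). Then U is unitary, i.e. U U* = 1 as well. -/

import Mathlib

open scoped Classical

namespace BSpaper

/-- `act m σ`: the result of pulling `b^m` through the stem with digit string `σ`
in `BS(c,d)` (acting on the digits). -/
def act (c : ℕ) {d : ℕ} : ℕ → List (Fin d) → List (Fin d)
  | _, [] => []
  | m, i :: σ => ⟨(m + (i : ℕ)) % d, Nat.mod_lt _ i.pos⟩ :: act c (c * ((m + (i : ℕ)) / d)) σ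

/-- `carry m σ`: the power of `b` emerging on the right when `b^m` is pulled through the
stem with digit string `σ`. -/
def carry (c : ℕ) {d : ℕ} : ℕ → List (Fin d) → ℕ
  | m, [] => m
  | m, i :: σ => carry c (c * ((m + (i : ℕ)) / d)) σ

lemma act_surj (c : ℕ) {d : ℕ} (hd : 0 < d) :
    ∀ (τ : List (Fin d)) (m : ℕ), ∃ σ, act c m σ = τ := by
  intro τ
  induction τ with
  | nil => exact fun m => ⟨[], rfl⟩
  | cons i τ ih =>
    intro m
    have hjlt : ((i : ℕ) + d - m % d) % d < d := Nat.mod_lt _ hd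
    set j : Fin d := ⟨((i : ℕ) + d - m % d) % d, hjlt⟩ with hj
    have hmod : (m + (j : ℕ)) % d = (i : ℕ) := by
      have h1 : (m + ((i : ℕ) + d - m % d) % d) % d
          = (m + ((i : ℕ) + d - m % d)) % d := Nat.add_mod_mod _ _ _
      have h2 : m + ((i : ℕ) + d - m % d) = ((i : ℕ) + d) + d * (m / d) := by
        have h3 := Nat.div_add_mod m d
        have h4 : m % d < d := Nat.mod_lt _ hd
        omega
      have h5 : (((i : ℕ) + d) + d * (m / d)) % d = ((i : ℕ) + d) % d := by
        have := Nat.add_mul_mod_self_left ((i : ℕ) + d) d (m / d)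
        simpa using this
      have h6 : ((i : ℕ) + d) % d = (i : ℕ) % d := Nat.add_mod_right _ _
      have h7 : (i : ℕ) % d = (i : ℕ) := Nat.mod_eq_of_lt i.isLt
      simp only [hj]
      rw [h1, h2, h5, h6, h7]
    obtain ⟨σ', hσ'⟩ := ih (c * ((m + (j : ℕ)) / d))
    refine ⟨j :: σ', ?_⟩
    simp only [act, hσ']
    congr 1
    exact Fin.ext hmod

open ContinuousLinearMap in
/-- Let W be a unitary on H and let U be the isometry on
K = lp (fun _ : List (Fin d) => H) 2 determined by
U (single σ h) = single (act 1 σ) (W^(carry 1 σ) h).  Then U is unitary: U U* = 1. -/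
theorem statement17 (c d : ℕ) (hc : 0 < c) (hd : 0 < d)
    {H : Type*} [NormedAddCommGroup H] [InnerProductSpace ℂ H] [CompleteSpace H]
    (W : H →L[ℂ] H) (hW : adjoint W * W = 1) (hW' : W * adjoint W = 1)
    (U : lp (fun _ : List (Fin d) => H) 2 →L[ℂ] lp (fun _ : List (Fin d) => H) 2)
    (hUiso : adjoint U * U = 1)
    (hU : ∀ (σ : List (Fin d)) (h : H),
      U (lp.single 2 σ h) = lp.single 2 (act c 1 σ) ((W ^ carry c 1 σ) h)) :
    U * adjoint U = 1 := by
  -- W^n (W*)^n = 1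
  have hWn : ∀ n : ℕ, W ^ n * (adjoint W) ^ n = 1 := by
    intro n
    induction n with
    | zero => simp
    | succ n ih =>
      rw [pow_succ' W, pow_succ (adjoint W)]
      calc W * W ^ n * ((adjoint W) ^ n * adjoint W)
          = W * (W ^ n * (adjoint W) ^ n) * adjoint W := by
            simp only [mul_assoc]
        _ = 1 := by rw [ih, mul_one, hW']
  -- every single is in the range of U
  have hrange : ∀ (τ : List (Fin d)) (h : H), ∃ y, U y = lp.single 2 τ h := by
    intro τ h
    obtain ⟨σ, hσ⟩ := act_surj c hd τ 1
    refine ⟨lp.single 2 σ (((adjoint W) ^ carry c 1 σ) h), ?_⟩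
    rw [hU, hσ]
    congr 1
    have := congrArg (fun (A : H →L[ℂ] H) => A h) (hWn (carry c 1 σ))
    simpa using this
  -- adjoint U is injective
  have hinj : ∀ x : lp (fun _ : List (Fin d) => H) 2, adjoint U x = 0 → x = 0 := by
    intro x hx
    have key : ∀ (τ : List (Fin d)) (h : H),
        (inner ℂ (lp.single 2 τ h) x : ℂ) = 0 := by
      intro τ h
      obtain ⟨y, hy⟩ := hrange τ h
      rw [← hy]
      calc (inner ℂ (U y) x : ℂ) = inner ℂ y (adjoint U x) :=
            (ContinuousLinearMap.adjoint_inner_right U y x).symm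
        _ = 0 := by rw [hx, inner_zero_right]
    have hxapp : ∀ τ : List (Fin d), x τ = 0 := by
      intro τ
      have := key τ (x τ)
      rw [lp.inner_single_left] at this
      exact inner_self_eq_zero.mp this
    ext τ
    simpa using hxapp τ
  -- conclude
  refine ContinuousLinearMap.ext fun x => ?_
  have h0 : adjoint U ((U * adjoint U) x - x) = 0 := by
    have : adjoint U ((U * adjoint U) x) = adjoint U x := by
      have := congrArg (fun A : lp (fun _ : List (Fin d) => H) 2 →L[ℂ]
          lp (fun _ : List (Fin d) => H) 2 => A (adjoint U x)) hUiso
      simpa [ContinuousLinearMap.mul_apply] using this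
    rw [map_sub, this, sub_self]
  have := hinj _ h0
  have h1 : (U * adjoint U) x - x = 0 := this
  simpa [sub_eq_zero] using h1

end BSpaper
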